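/- If D is a generic symmetric subset of a group G containing the identity (i.e., finitely many left translates of D cover G), then the subgroup generated by D equals D^{+m} for some finite m, i.e., D generates its subgroup in finitely many steps. -/
import Mathlib


open Pointwise

/-- If D ⊆ G is symmetric, contains 1, and is generic (finitely many left
translates cover G), then D generates its subgroup in finitely many steps. -/
theorem stmt_2 {G : Type*} [Group G] (D : Set G)
    (h1 : (1 : G) ∈ D) (hsymm : D⁻¹ = D)
    (hgen : ∃ s : Finset G, ⋃ g ∈ s, g • D = Set.univ) :
    ∃ m : ℕ, D ^ m = (Subgroup.closure D : Set G) := by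
  obtain ⟨s, hs⟩ := hgen
  -- every element of the closure lies in some power of D
  have key : ∀ x ∈ Subgroup.closure D, ∃ n : ℕ, x ∈ D ^ n := by
    intro x hx
    induction hx using Subgroup.closure_induction with
    | mem y hy => exact ⟨1, by simpa using hy⟩
    | one => exact ⟨0, by simp⟩
    | mul y z _ _ hy hz =>
        obtain ⟨a, ha⟩ := hy
        obtain ⟨b, hb⟩ := hz
        exact ⟨a + b, by rw [pow_add]; exact Set.mul_mem_mul ha hb⟩
    | inv y _ hy =>
        obtain ⟨a, ha⟩ := hy
        refine ⟨a, ?_⟩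
        have : y⁻¹ ∈ (D ^ a)⁻¹ := by simpa using ha
        rwa [← inv_pow, hsymm] at this
  -- choose a power for each g in s lying in the closure
  classical
  have hchoice : ∀ g : G, ∃ n : ℕ, g ∈ (Subgroup.closure D : Set G) → g ∈ D ^ n := by
    intro g
    by_cases hg : g ∈ (Subgroup.closure D : Set G)
    · obtain ⟨n, hn⟩ := key g hg
      exact ⟨n, fun _ => hn⟩
    · exact ⟨0, fun h => absurd h hg⟩
  choose f hf using hchoice
  refine ⟨s.sup f + 1, le_antisymm ?_ ?_⟩
  · -- D ^ m ⊆ closure D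
    intro x hx
    have : D ^ (s.sup f + 1) ⊆ (Subgroup.closure D : Set G) := by
      have hD : D ⊆ (Subgroup.closure D : Set G) := Subgroup.subset_closure
      have h1' : (1 : G) ∈ (Subgroup.closure D : Set G) := (Subgroup.closure D).one_mem
      have hpow : ∀ n : ℕ, ((Subgroup.closure D : Set G)) ^ n ⊆ (Subgroup.closure D : Set G) := by
        intro n
        induction n with
        | zero => intro y hy; simpa using (show y = 1 by simpa using hy) ▸ h1'
        | succ n ih =>
            rw [pow_succ]
            rintro y ⟨a, ha, b, hb, rfl⟩
            exact (Subgroup.closure D).mul_mem (ih ha) hb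
      exact (Set.pow_subset_pow_left hD).trans (hpow _)
    exact this hx
  · -- closure D ⊆ D ^ m
    intro x hx
    have hxu : x ∈ ⋃ g ∈ s, g • D := by rw [hs]; trivial
    simp only [Set.mem_iUnion] at hxu
    obtain ⟨g, hgs, hxg⟩ := hxu
    obtain ⟨d, hd, rfl⟩ := hxg
    -- g = (g*d) * d⁻¹ ∈ closure D
    have hginv : g ∈ (Subgroup.closure D : Set G) := by
      have hdmem : d ∈ Subgroup.closure D := Subgroup.subset_closure hd
      have : g * d * d⁻¹ ∈ Subgroup.closure D :=
        (Subgroup.closure D).mul_mem hx ((Subgroup.closure D).inv_mem hdmem)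
      simpa using this
    have hg : g ∈ D ^ f g := hf g hginv
    have hgle : g ∈ D ^ s.sup f := Set.pow_subset_pow_right h1 (Finset.le_sup hgs) hg
    rw [pow_succ]
    exact Set.mul_mem_mul hgle hd
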